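/- (Singularity criterion of type C, k = n; the key step of the main theorem for C_n/P(α_n).) Let n ≥ 2 and let a_1,…,a_n be nonnegative integers. Then for every integer t, there exists a positive root α ∈ Φ⁺_C with ⟨w(t), α⟩ = 0 if and only if t belongs to the step-matrix entry set S^C_{n,a}. -/
import Mathlib


open Finset

/-- The positive roots of type `Cₙ`: `eₚ+e_q` (`p≤q`) and `eₚ-e_q` (`p<q`). -/
def PhiC (n : ℕ) : Set (Fin n → ℝ) :=
  {α | ∃ p q : Fin n, p ≤ q ∧
      α = fun i => (if i = p then (1:ℝ) else 0) + (if i = q then 1 else 0)} ∪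
  {α | ∃ p q : Fin n, p < q ∧
      α = fun i => (if i = p then (1:ℝ) else 0) - (if i = q then 1 else 0)}

/-- Standard inner product on `ℝⁿ`. -/
noncomputable def ip (n : ℕ) (v w : Fin n → ℝ) : ℝ := ∑ i, v i * w i

/-- The coordinate form of the weight `λ+ρ-tλ_n` for type `Cₙ`
(coordinates are indexed one-based). -/
noncomputable def wCn (n : ℕ) (a : ℕ → ℤ) (t : ℤ) : Fin n → ℝ := fun i =>
  (∑ u ∈ Icc (i.val + 1) (n - 1), (a u : ℝ)) + (a n : ℝ) + 1
    + ((n : ℝ) - (i.val + 1)) - (t : ℝ)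

/-- The step-matrix entry set `S^C_{n,a}` (the case `k = n`). -/
def SCn (n : ℕ) (a : ℕ → ℤ) : Set ℚ :=
  {x | ∃ i j : ℕ, 1 ≤ i ∧ i ≤ j ∧ j ≤ n ∧
    x = ((∑ u ∈ Icc (n + 1 - i) (n - 1), (a u : ℚ))
      + (∑ u ∈ Icc (n + 1 - j) (n - 1), (a u : ℚ)) + 2 * (a n : ℚ) + i + j) / 2}

lemma ip_add (n : ℕ) (v : Fin n → ℝ) (p q : Fin n) :
    ip n v (fun i => (if i = p then (1:ℝ) else 0) + (if i = q then 1 else 0))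
      = v p + v q := by
  simp [ip, mul_add, Finset.sum_add_distrib, mul_ite, mul_one, mul_zero,
    Finset.sum_ite_eq']

lemma ip_sub (n : ℕ) (v : Fin n → ℝ) (p q : Fin n) :
    ip n v (fun i => (if i = p then (1:ℝ) else 0) - (if i = q then 1 else 0))
      = v p - v q := by
  simp [ip, mul_sub, Finset.sum_sub_distrib, mul_ite, mul_one, mul_zero,
    Finset.sum_ite_eq']

/-- Singularity criterion of type `C`, `k = n`: `λ+ρ-tλ_n` is singular iff `t` is an
entry of the step matrix `T^C_{n,λ}`. -/
theorem singular_criterion_C_eq (n : ℕ) (hn : 2 ≤ n)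
    (a : ℕ → ℤ) (ha : ∀ u, 1 ≤ u → u ≤ n → 0 ≤ a u) (t : ℤ) :
    (∃ α ∈ PhiC n, ip n (wCn n a t) α = 0) ↔ (t : ℚ) ∈ SCn n a := by
  set S : ℕ → ℤ := fun i => ∑ u ∈ Ioc i (n-1), a u with hS
  have hw : ∀ i : Fin n, wCn n a t i
      = ((S i.val + a n + (n : ℤ) - i.val - t : ℤ) : ℝ) := by
    intro i
    have h1 : Icc (i.val+1) (n-1) = Ioc i.val (n-1) := by
      rw [Finset.Icc_add_one_left_eq_Ioc]
    simp only [wCn, h1, hS]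
    push_cast
    ring
  have hSsplit : ∀ p q : Fin n, p.val ≤ q.val →
      S p.val = (∑ u ∈ Ioc p.val q.val, a u) + S q.val := by
    intro p q hpq
    have h1 : q.val ≤ n - 1 := by omega
    exact (Finset.sum_Ioc_consecutive (fun u => a u) hpq h1).symm
  have hSnn : ∀ p q : Fin n, 0 ≤ ∑ u ∈ Ioc p.val q.val, a u := by
    intro p q
    apply Finset.sum_nonneg
    intro u hu
    rw [Finset.mem_Ioc] at hu
    have := q.isLt
    exact ha u (by omega) (by omega)
  constructor
  · rintro ⟨α, hα, hip⟩
    rcases hα with ⟨p, q, hpq, rfl⟩ | ⟨p, q, hpq, rfl⟩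
    · rw [ip_add, hw p, hw q] at hip
      have hz : S p.val + a n + (n : ℤ) - p.val - t
          + (S q.val + a n + (n : ℤ) - q.val - t) = 0 := by exact_mod_cast hip
      refine ⟨n - q.val, n - p.val, ?_, ?_, ?_, ?_⟩
      · have := q.isLt; omega
      · exact Nat.sub_le_sub_left (Fin.le_def.mp hpq) n
      · omega
      · have e1 : n + 1 - (n - q.val) = q.val + 1 := by have := q.isLt; omega
        have e2 : n + 1 - (n - p.val) = p.val + 1 := by have := p.isLt; omega
        rw [e1, e2, Finset.Icc_add_one_left_eq_Ioc, Finset.Icc_add_one_left_eq_Ioc]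
        have c1 : ((n - q.val : ℕ) : ℚ) = (n : ℚ) - q.val := by
          have := q.isLt; push_cast [Nat.cast_sub (by omega : q.val ≤ n)]; ring
        have c2 : ((n - p.val : ℕ) : ℚ) = (n : ℚ) - p.val := by
          have := p.isLt; push_cast [Nat.cast_sub (by omega : p.val ≤ n)]; ring
        have hq := congrArg (fun z : ℤ => (z : ℚ)) hz
        simp only [hS] at hq
        push_cast at hq
        rw [c1, c2]
        linarith
    · rw [ip_sub, hw p, hw q] at hip
      exfalso
      have hz : S p.val + a n + (n : ℤ) - p.val - t
          - (S q.val + a n + (n : ℤ) - q.val - t) = 0 := by exact_mod_cast hip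
      have hlt : p.val < q.val := Fin.lt_def.mp hpq
      have := hSsplit p q hlt.le
      have := hSnn p q
      omega
  · rintro ⟨i, j, hi, hij, hjn, hx⟩
    have hjn' : n - j < n := by omega
    have hin' : n - i < n := by omega
    set p : Fin n := ⟨n - j, hjn'⟩
    set q : Fin n := ⟨n - i, hin'⟩
    refine ⟨_, Or.inl ⟨p, q, ?_, rfl⟩, ?_⟩
    · exact Fin.le_def.mpr (Nat.sub_le_sub_left hij n)
    · rw [ip_add, hw p, hw q]
      have e1 : n + 1 - i = (n - i) + 1 := by omega
      have e2 : n + 1 - j = (n - j) + 1 := by omega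
      rw [e1, e2, Finset.Icc_add_one_left_eq_Ioc, Finset.Icc_add_one_left_eq_Ioc] at hx
      have hpv : (p.val : ℚ) = (n : ℚ) - j := by
        show ((n - j : ℕ) : ℚ) = _
        push_cast [Nat.cast_sub (by omega : j ≤ n)]; ring
      have hqv : (q.val : ℚ) = (n : ℚ) - i := by
        show ((n - i : ℕ) : ℚ) = _
        push_cast [Nat.cast_sub (by omega : i ≤ n)]; ring
      have hz' : S p.val + a n + (n : ℤ) - p.val - t
          + (S q.val + a n + (n : ℤ) - q.val - t) = 0 := by
        have hz : ((S p.val + a n + (n : ℤ) - p.val - t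
            + (S q.val + a n + (n : ℤ) - q.val - t) : ℤ) : ℚ) = 0 := by
          simp only [hS]
          push_cast
          linarith [hx]
        exact_mod_cast hz
      have := congrArg (fun z : ℤ => (z : ℝ)) hz'
      push_cast at this ⊢
      linarith
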